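/- arXiv:1707.09027 — 2 statements merged into one kernel-verified Lean document; each statement's English description precedes it below -/
import Mathlib

section
/- Let (X, U) be a uniform P-space and G = F(X, U) the uniform free topological group, with Bₙ the words of length ≤ n. Then the following are equivalent: (1) every Bₙ is strongly functionally balanced; (2) every Bₙ is functionally balanced; (3) G is functionally balanced; (4) G is strongly functionally balanced. -/
open Filter Set Topology Pointwise

universe u v

/-- A P-space: countable intersections of open sets are open. -/
def IsPSpace (X : Type*) [TopologicalSpace X] : Prop :=
  ∀ s : ℕ → Set X, (∀ n, IsOpen (s n)) → IsOpen (⋂ n, s n)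

/-- A uniform P-space: countable intersections of entourages are entourages. -/
def IsUniformPSpace (X : Type*) [UniformSpace X] : Prop :=
  ∀ s : ℕ → Set (X × X), (∀ n, s n ∈ uniformity X) → (⋂ n, s n) ∈ uniformity X

/-- The left uniformity of a topological group, as a filter on `G × G`. -/
def leftUnif (G : Type*) [Group G] [TopologicalSpace G] : Filter (G × G) :=
  Filter.comap (fun p : G × G => p.1⁻¹ * p.2) (nhds 1)

/-- The right uniformity of a topological group, as a filter on `G × G`. -/
def rightUnif (G : Type*) [Group G] [TopologicalSpace G] : Filter (G × G) :=
  Filter.comap (fun p : G × G => p.1 * p.2⁻¹) (nhds 1)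

/-- The two-sided uniformity (supremum of left and right uniformities). -/
def twoSidedUnif (G : Type*) [Group G] [TopologicalSpace G] : Filter (G × G) :=
  leftUnif G ⊓ rightUnif G

/-- `ε` belongs to the trace of the filter `μ` on the subset `B`. -/
def MemTrace {G : Type*} (μ : Filter (G × G)) (B : Set G) (ε : Set (G × G)) : Prop :=
  ∃ δ ∈ μ, δ ∩ B ×ˢ B = ε ∩ B ×ˢ B

/-- `f : B → ℝ` is uniformly continuous for the trace on `B` of the filter `μ` on `G × G`. -/
def UCOn {G : Type*} (μ : Filter (G × G)) (B : Set G) (f : B → ℝ) : Prop :=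
  ∀ e : ℝ, 0 < e → ∃ δ ∈ μ, ∀ x y : B, ((x : G), (y : G)) ∈ δ → |f x - f y| < e

/-- `ε` is an equivalence relation on the subset `B`. -/
def IsEquivOn {G : Type*} (B : Set G) (ε : Set (G × G)) : Prop :=
  (∀ x ∈ B, (x, x) ∈ ε) ∧ (∀ x ∈ B, ∀ y ∈ B, (x, y) ∈ ε → (y, x) ∈ ε) ∧
    (∀ x ∈ B, ∀ y ∈ B, ∀ z ∈ B, (x, y) ∈ ε → (y, z) ∈ ε → (x, z) ∈ ε)

/-- The relation `ε` has at most `c` equivalence classes on `B`. -/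
def ClassesLE {G : Type*} (B : Set G) (ε : Set (G × G)) (c : Cardinal) : Prop :=
  Cardinal.mk ↥(Set.range fun x : B => {y : B | ((x : G), (y : G)) ∈ ε}) ≤ c

/-- The symmetric subset `B` of a topological group `G` is functionally balanced. -/
def FunBalancedOn (G : Type*) [Group G] [TopologicalSpace G] (B : Set G) : Prop :=
  ∀ f : B → ℝ, (∃ M : ℝ, ∀ x : B, |f x| ≤ M) →
    UCOn (leftUnif G) B f → UCOn (rightUnif G) B f

/-- The symmetric subset `B` of a topological group `G` is strongly functionally balanced. -/
def StronglyFunBalancedOn (G : Type*) [Group G] [TopologicalSpace G] (B : Set G) : Prop :=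
  ∀ f : B → ℝ, UCOn (leftUnif G) B f → UCOn (rightUnif G) B f

/-- A non-archimedean topological group: open subgroups form a base at the identity. -/
def IsNonArchGroup (G : Type*) [Group G] [TopologicalSpace G] : Prop :=
  ∀ U ∈ nhds (1 : G), ∃ H : Subgroup G, IsOpen (H : Set G) ∧ (H : Set G) ⊆ U

/-- Words of length at most `n` in the free group. -/
def Bword (X : Type*) [DecidableEq X] (n : ℕ) : Set (FreeGroup X) :=
  {w : FreeGroup X | w.toWord.length ≤ n}

/-- The given group topology on `FreeGroup X` makes it the uniform free topological group
over the uniform space `X`: the canonical map is uniformly continuous (for the two-sided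
uniformity) and every uniformly continuous map to a topological group extends to a
continuous homomorphism. -/
def IsUniformFreeTopGroup (X : Type u) [UniformSpace X] [TopologicalSpace (FreeGroup X)]
    [IsTopologicalGroup (FreeGroup X)] : Prop :=
  Filter.Tendsto (Prod.map (FreeGroup.of : X → FreeGroup X) FreeGroup.of) (uniformity X)
      (twoSidedUnif (FreeGroup X)) ∧
    ∀ (G : Type u) [Group G] [TopologicalSpace G] [IsTopologicalGroup G] (φ : X → G),
      Filter.Tendsto (Prod.map φ φ) (uniformity X) (twoSidedUnif G) →
        Continuous ⇑(FreeGroup.lift φ)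

/-- The given group topology on `FreeGroup X` makes it the free non-archimedean balanced
topological group over the uniform space `X`. -/
def IsFreeNABalancedGroup (X : Type u) [UniformSpace X] [TopologicalSpace (FreeGroup X)]
    [IsTopologicalGroup (FreeGroup X)] : Prop :=
  IsNonArchGroup (FreeGroup X) ∧ leftUnif (FreeGroup X) = rightUnif (FreeGroup X) ∧
    Filter.Tendsto (Prod.map (FreeGroup.of : X → FreeGroup X) FreeGroup.of) (uniformity X)
      (twoSidedUnif (FreeGroup X)) ∧
    ∀ (G : Type u) [Group G] [TopologicalSpace G] [IsTopologicalGroup G] (φ : X → G),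
      IsNonArchGroup G → leftUnif G = rightUnif G →
      Filter.Tendsto (Prod.map φ φ) (uniformity X) (twoSidedUnif G) →
        Continuous ⇑(FreeGroup.lift φ)

/-- countable intersections of nhds of 1 are nhds of 1 -/
def NhdsOnePClosed (G : Type*) [Group G] [TopologicalSpace G] : Prop :=
  ∀ s : ℕ → Set G, (∀ n, s n ∈ nhds (1 : G)) → (⋂ n, s n) ∈ nhds (1 : G)

section Aux
variable {G : Type*} [Group G] [TopologicalSpace G] [IsTopologicalGroup G]

lemma exists_subgroup_nhds (hPG : NhdsOnePClosed G) {U : Set G} (hU : U ∈ 𝓝 (1 : G)) :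
    ∃ H : Subgroup G, (H : Set G) ∈ 𝓝 (1 : G) ∧ (H : Set G) ⊆ U := by
  classical
  have step : ∀ s : Set G, s ∈ 𝓝 (1 : G) →
      ∃ t : Set G, t ∈ 𝓝 (1 : G) ∧ (∀ a ∈ t, a⁻¹ ∈ t) ∧ (∀ a ∈ t, ∀ b ∈ t, a * b ∈ s)
        ∧ t ⊆ s := by
    intro s hs
    obtain ⟨V, hVo, hV1, hVV⟩ := exists_open_nhds_one_mul_subset hs
    refine ⟨V ∩ (fun x => x⁻¹) ⁻¹' V, ?_, ?_, ?_, ?_⟩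
    · exact Filter.inter_mem (hVo.mem_nhds hV1)
        (continuous_inv.continuousAt.preimage_mem_nhds (by simpa using hVo.mem_nhds hV1))
    · rintro a ⟨h1, h2⟩; exact ⟨h2, by simpa using h1⟩
    · rintro a ⟨ha, -⟩ b ⟨hb, -⟩; exact hVV ⟨a, ha, b, hb, rfl⟩
    · rintro a ⟨ha, -⟩; simpa using hVV ⟨a, ha, 1, hV1, rfl⟩
  choose T hT1 hT2 hT3 hT4 using step
  let V : ℕ → {s : Set G // s ∈ 𝓝 (1 : G)} := fun n =>
    Nat.rec ⟨T U hU, hT1 U hU⟩ (fun _ p => ⟨T p.1 p.2, hT1 p.1 p.2⟩) n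
  have hVsucc : ∀ n, (V (n + 1)).1 = T (V n).1 (V n).2 := fun n => rfl
  refine ⟨{ carrier := ⋂ n, (V n).1
            one_mem' := Set.mem_iInter.2 fun n => mem_of_mem_nhds (V n).2
            mul_mem' := fun {a b} ha hb => Set.mem_iInter.2 fun n => by
              have := hT3 (V n).1 (V n).2 a (by
                  have := Set.mem_iInter.1 ha (n + 1); rwa [hVsucc n] at this) b (by
                  have := Set.mem_iInter.1 hb (n + 1); rwa [hVsucc n] at this)
              exact this
            inv_mem' := fun {a} ha => Set.mem_iInter.2 fun n => by
              match n with
              | 0 => exact hT2 U hU a (Set.mem_iInter.1 ha 0)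
              | (m + 1) =>
                have h := Set.mem_iInter.1 ha (m + 1)
                rw [hVsucc m] at h
                have := hT2 (V m).1 (V m).2 a h
                rw [hVsucc m]
                exact this },
          hPG (fun n => (V n).1) (fun n => (V n).2), ?_⟩
  · intro a ha
    have h0 := Set.mem_iInter.1 ha 0
    exact hT4 U hU h0

lemma ucOn_comap_iff (hPG : NhdsOnePClosed G) (k : G × G → G) (B : Set G) (f : B → ℝ) :
    UCOn (Filter.comap k (𝓝 1)) B f ↔
      ∃ H : Subgroup G, (H : Set G) ∈ 𝓝 (1 : G) ∧
        ∀ x y : B, k ((x : G), (y : G)) ∈ H → f x = f y := by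
  constructor
  · intro h
    choose δ hδ1 hδ2 using fun n : ℕ => h (1 / (n + 1)) (by positivity)
    choose U hU hUsub using fun n => Filter.mem_comap.1 (hδ1 n)
    obtain ⟨H, hH, hHsub⟩ := exists_subgroup_nhds hPG (hPG U hU)
    refine ⟨H, hH, fun x y hxy => ?_⟩
    have hall : ∀ n : ℕ, |f x - f y| < 1 / (n + 1) := fun n =>
      hδ2 n x y (hUsub n (Set.mem_iInter.1 (hHsub hxy) n))
    by_contra hne
    obtain ⟨n, hn⟩ := exists_nat_one_div_lt (abs_pos.2 (sub_ne_zero.2 hne))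
    exact absurd (hall n) (not_lt.2 hn.le)
  · rintro ⟨H, hH, hconst⟩ e he
    refine ⟨k ⁻¹' H, Filter.preimage_mem_comap hH, fun x y hxy => ?_⟩
    rw [hconst x y hxy, sub_self, abs_zero]
    exact he

lemma ucOn_left_iff (hPG : NhdsOnePClosed G) (B : Set G) (f : B → ℝ) :
    UCOn (leftUnif G) B f ↔
      ∃ H : Subgroup G, (H : Set G) ∈ 𝓝 (1 : G) ∧
        ∀ x y : B, (x : G)⁻¹ * (y : G) ∈ H → f x = f y :=
  ucOn_comap_iff hPG (fun p : G × G => p.1⁻¹ * p.2) B f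

lemma ucOn_right_iff (hPG : NhdsOnePClosed G) (B : Set G) (f : B → ℝ) :
    UCOn (rightUnif G) B f ↔
      ∃ H : Subgroup G, (H : Set G) ∈ 𝓝 (1 : G) ∧
        ∀ x y : B, (x : G) * (y : G)⁻¹ ∈ H → f x = f y :=
  ucOn_comap_iff hPG (fun p : G × G => p.1 * p.2⁻¹) B f

end Aux

section Aux2
variable {G : Type*} [Group G] [TopologicalSpace G] [IsTopologicalGroup G]

lemma funBal_iff_strong (hPG : NhdsOnePClosed G) (B : Set G) :
    FunBalancedOn G B ↔ StronglyFunBalancedOn G B := by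
  constructor
  · intro hfb f hf
    obtain ⟨H, hH, hconst⟩ := (ucOn_left_iff hPG B f).1 hf
    set g : B → ℝ := fun x => Real.arctan (f x) with hg
    have hgb : ∃ M : ℝ, ∀ x : B, |g x| ≤ M :=
      ⟨Real.pi / 2, fun x => (abs_lt.2 ⟨Real.neg_pi_div_two_lt_arctan _,
        Real.arctan_lt_pi_div_two _⟩).le⟩
    have hgl : UCOn (leftUnif G) B g :=
      (ucOn_left_iff hPG B g).2 ⟨H, hH, fun x y h => by rw [hg]; simp [hconst x y h]⟩
    have hgr := hfb g hgb hgl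
    obtain ⟨H', hH', hconst'⟩ := (ucOn_right_iff hPG B g).1 hgr
    exact (ucOn_right_iff hPG B f).2
      ⟨H', hH', fun x y h => Real.arctan_injective (hconst' x y h)⟩
  · intro hs f _ hf
    exact hs f hf

end Aux2

lemma freeGroup_isPGroup {X : Type u} [UniformSpace X] [TopologicalSpace (FreeGroup X)]
    [IsTopologicalGroup (FreeGroup X)] (hP : IsUniformPSpace X) (hF : IsUniformFreeTopGroup X) :
    NhdsOnePClosed (FreeGroup X) := by
  classical
  have hsplit : ∀ t : Set (FreeGroup X), t ∈ 𝓝 (1 : FreeGroup X) →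
      ∃ v, v ∈ 𝓝 (1 : FreeGroup X) ∧ v * v ⊆ t := by
    intro t ht
    obtain ⟨V, hVo, hV1, hVV⟩ := exists_open_nhds_one_mul_subset ht
    exact ⟨V, hVo.mem_nhds hV1, hVV⟩
  choose sp hsp1 hsp2 using hsplit
  let B : GroupFilterBasis (FreeGroup X) :=
    { sets := {t | ∃ f : ℕ → Set (FreeGroup X), (∀ n, f n ∈ 𝓝 (1 : FreeGroup X)) ∧ t = ⋂ n, f n}
      nonempty := ⟨Set.univ, fun _ => Set.univ, fun _ => Filter.univ_mem, by simp⟩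
      inter_sets := by
        rintro x y ⟨fx, hfx, rfl⟩ ⟨fy, hfy, rfl⟩
        exact ⟨(⋂ n, fx n) ∩ ⋂ n, fy n,
          ⟨fun n => fx n ∩ fy n, fun n => Filter.inter_mem (hfx n) (hfy n),
            (Set.iInter_inter_distrib _ _).symm⟩, subset_rfl⟩
      one' := by
        rintro U ⟨f, hf, rfl⟩
        exact Set.mem_iInter.2 fun n => mem_of_mem_nhds (hf n)
      mul' := by
        rintro U ⟨f, hf, rfl⟩
        refine ⟨⋂ n, sp (f n) (hf n), ⟨_, fun n => hsp1 _ _, rfl⟩, ?_⟩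
        rintro z ⟨a, ha, b, hb, rfl⟩
        exact Set.mem_iInter.2 fun n =>
          hsp2 (f n) (hf n) ⟨a, Set.mem_iInter.1 ha n, b, Set.mem_iInter.1 hb n, rfl⟩
      inv' := by
        rintro U ⟨f, hf, rfl⟩
        refine ⟨⋂ n, (fun x : FreeGroup X => x⁻¹) ⁻¹' f n,
          ⟨_, fun n => continuous_inv.continuousAt.preimage_mem_nhds (by simpa using hf n), rfl⟩, ?_⟩
        rw [Set.preimage_iInter]
      conj' := by
        intro x₀ U hU
        obtain ⟨f, hf, rfl⟩ := hU
        have hc : Continuous (fun x : FreeGroup X => x₀ * x * x₀⁻¹) :=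
          (continuous_const.mul continuous_id).mul continuous_const
        refine ⟨⋂ n, (fun x : FreeGroup X => x₀ * x * x₀⁻¹) ⁻¹' f n,
          ⟨_, fun n => hc.continuousAt.preimage_mem_nhds (by simpa using hf n), rfl⟩, ?_⟩
        rw [Set.preimage_iInter] }
  intro s hs
  have htg' : @IsTopologicalGroup (FreeGroup X) B.topology _ := B.isTopologicalGroup
  have hbase : ∀ U ∈ @nhds (FreeGroup X) B.topology 1,
      ∃ g : ℕ → Set (FreeGroup X), (∀ n, g n ∈ 𝓝 (1 : FreeGroup X)) ∧ ⋂ n, g n ⊆ U := by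
    intro U hU
    rw [B.nhds_one_eq] at hU
    obtain ⟨t, ⟨g, hg, rfl⟩, hsub⟩ := B.toFilterBasis.mem_filter_iff.1 hU
    exact ⟨g, hg, hsub⟩
  have htd : Filter.Tendsto (Prod.map (FreeGroup.of : X → FreeGroup X) FreeGroup.of)
      (uniformity X) (@twoSidedUnif (FreeGroup X) _ B.topology) := by
    rw [show @twoSidedUnif (FreeGroup X) _ B.topology = @leftUnif (FreeGroup X) _ B.topology ⊓ @rightUnif (FreeGroup X) _ B.topology from rfl,
      Filter.tendsto_inf]
    constructor
    · rw [show @leftUnif (FreeGroup X) _ B.topology =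
        Filter.comap (fun p : FreeGroup X × FreeGroup X => p.1⁻¹ * p.2) (@nhds _ B.topology 1) from rfl,
        tendsto_comap_iff, Filter.tendsto_def]
      intro U hU
      obtain ⟨g, hg, hsub⟩ := hbase U hU
      have hmem : ∀ n, (Prod.map (FreeGroup.of : X → FreeGroup X) FreeGroup.of) ⁻¹'
          {p : FreeGroup X × FreeGroup X | p.1⁻¹ * p.2 ∈ g n} ∈ uniformity X := fun n =>
        Filter.mem_map.1 (hF.1 (Filter.mem_inf_of_left (Filter.preimage_mem_comap (hg n))))
      refine Filter.mem_of_superset (hP _ hmem) ?_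
      intro p hp
      exact hsub (Set.mem_iInter.2 fun n => Set.mem_iInter.1 hp n)
    · rw [show @rightUnif (FreeGroup X) _ B.topology =
        Filter.comap (fun p : FreeGroup X × FreeGroup X => p.1 * p.2⁻¹) (@nhds _ B.topology 1) from rfl,
        tendsto_comap_iff, Filter.tendsto_def]
      intro U hU
      obtain ⟨g, hg, hsub⟩ := hbase U hU
      have hmem : ∀ n, (Prod.map (FreeGroup.of : X → FreeGroup X) FreeGroup.of) ⁻¹'
          {p : FreeGroup X × FreeGroup X | p.1 * p.2⁻¹ ∈ g n} ∈ uniformity X := fun n =>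
        Filter.mem_map.1 (hF.1 (Filter.mem_inf_of_right (Filter.preimage_mem_comap (hg n))))
      refine Filter.mem_of_superset (hP _ hmem) ?_
      intro p hp
      exact hsub (Set.mem_iInter.2 fun n => Set.mem_iInter.1 hp n)
  have h2 := hF.2
  have hcont := @h2 (FreeGroup X) _ B.topology htg' FreeGroup.of htd
  have hid : FreeGroup.lift (FreeGroup.of : X → FreeGroup X) = MonoidHom.id (FreeGroup X) :=
    FreeGroup.ext_hom _ _ (by simp)
  rw [hid] at hcont
  have hle : ‹TopologicalSpace (FreeGroup X)› ≤ B.topology :=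
    continuous_id_iff_le.1 hcont
  have hmem' : (⋂ n, s n) ∈ @nhds (FreeGroup X) B.topology 1 := by
    rw [B.nhds_one_eq]
    exact B.toFilterBasis.mem_filter_of_mem ⟨s, hs, rfl⟩
  exact _root_.nhds_mono hle hmem'

/-- over a uniform P-space, the uniform free topological group is
(strongly) functionally balanced iff every ball `Bₙ` is (strongly) functionally balanced. -/
theorem uniformFree_funBalanced_tfae (X : Type u) [UniformSpace X] [DecidableEq X]
    [TopologicalSpace (FreeGroup X)] [IsTopologicalGroup (FreeGroup X)]
    (hP : IsUniformPSpace X) (hF : IsUniformFreeTopGroup X) :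
    ((∀ n : ℕ, StronglyFunBalancedOn (FreeGroup X) (Bword X n)) ↔
      (∀ n : ℕ, FunBalancedOn (FreeGroup X) (Bword X n))) ∧
    ((∀ n : ℕ, FunBalancedOn (FreeGroup X) (Bword X n)) ↔
      FunBalancedOn (FreeGroup X) Set.univ) ∧
    (FunBalancedOn (FreeGroup X) Set.univ ↔
      StronglyFunBalancedOn (FreeGroup X) Set.univ) := by
  classical
  have hPG : NhdsOnePClosed (FreeGroup X) := freeGroup_isPGroup hP hF
  have hEq : ∀ B : Set (FreeGroup X),
      FunBalancedOn (FreeGroup X) B ↔ StronglyFunBalancedOn (FreeGroup X) B :=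
    funBal_iff_strong hPG
  have key : (∀ n : ℕ, StronglyFunBalancedOn (FreeGroup X) (Bword X n)) ↔
      StronglyFunBalancedOn (FreeGroup X) Set.univ := by
    constructor
    · intro hn f hf
      obtain ⟨H, hH, hconst⟩ := (ucOn_left_iff hPG _ f).1 hf
      have hrn : ∀ n : ℕ, ∃ H' : Subgroup (FreeGroup X),
          (H' : Set (FreeGroup X)) ∈ 𝓝 (1 : FreeGroup X) ∧
          ∀ x y : Bword X n, (x : FreeGroup X) * (y : FreeGroup X)⁻¹ ∈ H' →
            f ⟨x, Set.mem_univ _⟩ = f ⟨y, Set.mem_univ _⟩ := by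
        intro n
        have hfl : UCOn (leftUnif (FreeGroup X)) (Bword X n)
            (fun x => f ⟨x, Set.mem_univ _⟩) :=
          (ucOn_left_iff hPG _ _).2
            ⟨H, hH, fun x y h => hconst ⟨x, Set.mem_univ _⟩ ⟨y, Set.mem_univ _⟩ h⟩
        exact (ucOn_right_iff hPG _ _).1 (hn n _ hfl)
      choose Hn hHn hcn using hrn
      refine (ucOn_right_iff hPG _ f).2 ⟨⨅ n, Hn n, ?_, ?_⟩
      · rw [Subgroup.coe_iInf]
        exact hPG _ hHn
      · rintro ⟨x, hxu⟩ ⟨y, hyu⟩ h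
        have hx : x ∈ Bword X (max x.toWord.length y.toWord.length) :=
          show x.toWord.length ≤ _ from le_max_left _ _
        have hy : y ∈ Bword X (max x.toWord.length y.toWord.length) :=
          show y.toWord.length ≤ _ from le_max_right _ _
        exact hcn _ ⟨x, hx⟩ ⟨y, hy⟩ (Subgroup.mem_iInf.1 h _)
    · intro hu n f hf
      obtain ⟨H, hH, hconst⟩ := (ucOn_left_iff hPG _ f).1 hf
      set S : FreeGroup X → Prop :=
        fun w => ∃ x : FreeGroup X, ∃ _ : x ∈ Bword X n, x⁻¹ * w ∈ H with hS
      set F : FreeGroup X → ℝ :=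
        fun w => if h : S w then f ⟨h.choose, h.choose_spec.choose⟩ else 0 with hFdef
      have hFconst : ∀ w w' : FreeGroup X, w⁻¹ * w' ∈ H → F w = F w' := by
        intro w w' hww
        by_cases hw : S w
        · have hw' : S w' := by
            obtain ⟨x, hx, hxw⟩ := hw
            refine ⟨x, hx, ?_⟩
            have := H.mul_mem hxw hww
            rwa [← mul_assoc, mul_assoc x⁻¹ w w⁻¹, mul_inv_cancel, mul_one] at this
          simp only [hFdef]
          rw [dif_pos hw, dif_pos hw']
          refine hconst ⟨hw.choose, hw.choose_spec.choose⟩ ⟨hw'.choose, hw'.choose_spec.choose⟩ ?_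
          have h1 := hw.choose_spec.choose_spec
          have h2 := hw'.choose_spec.choose_spec
          have h3 := H.mul_mem (H.mul_mem h1 hww) (H.inv_mem h2)
          have heq : hw.choose⁻¹ * w * (w⁻¹ * w') * (hw'.choose⁻¹ * w')⁻¹ =
              hw.choose⁻¹ * hw'.choose := by group
          rwa [heq] at h3
        · have hw' : ¬ S w' := by
            intro hcon
            obtain ⟨x, hx, hxw⟩ := hcon
            refine hw ⟨x, hx, ?_⟩
            have := H.mul_mem hxw (H.inv_mem hww)
            have heq : x⁻¹ * w' * (w⁻¹ * w')⁻¹ = x⁻¹ * w := by group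
            rwa [heq] at this
          simp only [hFdef]
          rw [dif_neg hw, dif_neg hw']
      have hFB : ∀ x : Bword X n, F (x : FreeGroup X) = f x := by
        intro x
        have hx : S (x : FreeGroup X) := ⟨x, x.2, by rw [inv_mul_cancel]; exact H.one_mem⟩
        simp only [hFdef]
        rw [dif_pos hx]
        exact hconst ⟨hx.choose, hx.choose_spec.choose⟩ x hx.choose_spec.choose_spec
      have hFl : UCOn (leftUnif (FreeGroup X)) Set.univ (fun w : (Set.univ : Set (FreeGroup X)) => F w) :=
        (ucOn_left_iff hPG _ _).2 ⟨H, hH, fun x y h => hFconst x y h⟩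
      have hFr := hu _ hFl
      obtain ⟨H', hH', hconst'⟩ := (ucOn_right_iff hPG _ _).1 hFr
      refine (ucOn_right_iff hPG _ f).2 ⟨H', hH', fun x y h => ?_⟩
      have := hconst' ⟨x, Set.mem_univ _⟩ ⟨y, Set.mem_univ _⟩ h
      rwa [hFB x, hFB y] at this
  refine ⟨forall_congr' fun n => (hEq _).symm, ?_, hEq _⟩
  calc (∀ n : ℕ, FunBalancedOn (FreeGroup X) (Bword X n))
      ↔ (∀ n : ℕ, StronglyFunBalancedOn (FreeGroup X) (Bword X n)) :=
        forall_congr' fun n => hEq _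
    _ ↔ StronglyFunBalancedOn (FreeGroup X) Set.univ := key
    _ ↔ FunBalancedOn (FreeGroup X) Set.univ := (hEq _).symm
end

section
/- Let G be a P-group, B a symmetric subset, and suppose ε is an equivalence relation on B belonging to the trace on B of the left uniformity of G with at most 𝔠 equivalence classes. Then there exists a bounded function f : B → [0,1] which is uniformly continuous for the trace of the left uniformity and satisfies f(x) = f(y) ⇔ (x,y) ∈ ε. -/
open Filter Set Topology Pointwise

universe u v

/-- an equivalence relation in the left trace uniformity with at most 𝔠
classes is realized by a bounded `[0,1]`-valued left-uniformly continuous function. -/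
theorem exists_separating_function (G : Type*) [Group G] [TopologicalSpace G]
    [IsTopologicalGroup G] (hP : IsPSpace G) (B : Set G) (hB : B⁻¹ = B)
    (ε : Set (G × G)) (hsub : ε ⊆ B ×ˢ B) (heq : IsEquivOn B ε)
    (htr : MemTrace (leftUnif G) B ε) (hcard : ClassesLE B ε Cardinal.continuum) :
    ∃ f : B → ℝ, (∀ x : B, f x ∈ Set.Icc (0 : ℝ) 1) ∧ UCOn (leftUnif G) B f ∧
      ∀ x y : B, (f x = f y ↔ ((x : G), (y : G)) ∈ ε) := by
  classical
  obtain ⟨δ, hδ, hδε⟩ := htr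
  obtain ⟨hrefl, hsymm, htrans⟩ := heq
  obtain ⟨emb⟩ : Nonempty (↥(Set.range fun x : B => {y : B | ((x : G), (y : G)) ∈ ε}) ↪
      ↥(Set.Icc (0:ℝ) 1)) := by
    rw [← Cardinal.lift_mk_le', Cardinal.mk_Icc_real (by norm_num : (0:ℝ) < 1),
      Cardinal.lift_continuum, Cardinal.lift_uzero]
    exact hcard
  let cl : B → ↥(Set.range fun x : B => {y : B | ((x : G), (y : G)) ∈ ε}) :=
    fun x => ⟨{y : B | ((x : G), (y : G)) ∈ ε}, Set.mem_range_self x⟩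
  have hcl : ∀ x y : B, cl x = cl y ↔ ((x : G), (y : G)) ∈ ε := by
    intro x y
    constructor
    · intro h
      have hsets : {z : B | ((x : G), (z : G)) ∈ ε} = {z : B | ((y : G), (z : G)) ∈ ε} :=
        congrArg Subtype.val h
      have hx : x ∈ {z : B | ((x : G), (z : G)) ∈ ε} := hrefl x x.2
      rw [hsets] at hx
      exact hsymm y y.2 x x.2 hx
    · intro h
      apply Subtype.ext
      ext z
      change ((x : G), (z : G)) ∈ ε ↔ ((y : G), (z : G)) ∈ ε
      constructor
      · intro hz
        exact htrans y y.2 x x.2 z z.2 (hsymm x x.2 y y.2 h) hz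
      · intro hz
        exact htrans x x.2 y y.2 z z.2 h hz
  have hmemε : ∀ x y : B, ((x : G), (y : G)) ∈ δ → ((x : G), (y : G)) ∈ ε := by
    intro x y hxy
    have h : ((x : G), (y : G)) ∈ δ ∩ B ×ˢ B := ⟨hxy, x.2, y.2⟩
    rw [hδε] at h
    exact h.1
  refine ⟨fun x => (emb (cl x)).1, fun x => (emb (cl x)).2, ?_, ?_⟩
  · intro e he
    refine ⟨δ, hδ, fun x y hxy => ?_⟩
    have h := (hcl x y).mpr (hmemε x y hxy)
    show |((emb (cl x) : ℝ)) - ((emb (cl y) : ℝ))| < e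
    rw [h]
    simpa using he
  · intro x y
    rw [← hcl x y]
    constructor
    · intro h
      exact emb.injective (Subtype.ext h)
    · intro h
      show ((emb (cl x) : ℝ)) = ((emb (cl y) : ℝ))
      rw [h]
end
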